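/- Let μ > 0 and v ∈ ℝ, and define ρ : ℝ × ℝ → ℝ and Φ : ℝ × ℝ → ℝ by ρ(t,x) = (μ/2)·sech²(√μ·(x − v·t/2)) and Φ(t,x) = (1/2)v·x + (1/2)(μ − v²/4)·t, where sech(y) = 2e^y/(e^{2y}+1). Then for all (t,x) ∈ ℝ × ℝ: (i) ∂ₜρ(t,x) + ∂ₓ(ρ(t,x)·∂ₓΦ(t,x)) = 0, and (ii) ∂ₜΦ(t,x) + (1/2)(∂ₓΦ(t,x))² = 2·ρ(t,x) + (1/2)·∂ₓₓ(√ρ)(t,x)/√(ρ(t,x)). -/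

import Mathlib

/-- The hyperbolic secant `sech(y) = 2eʸ/(e^{2y}+1)`. -/
noncomputable def sech (y : ℝ) : ℝ := 2 * Real.exp y / (Real.exp (2 * y) + 1)

/-- The density of the Gross–Pitaevskii soliton: `ρ(t,x) = (μ/2) sech²(√μ(x − vt/2))`. -/
noncomputable def solitonDensity (μ v : ℝ) (t x : ℝ) : ℝ :=
  (μ / 2) * (sech (Real.sqrt μ * (x - v * t / 2))) ^ 2

/-- The phase of the Gross–Pitaevskii soliton: `Φ(t,x) = (1/2)vx + (1/2)(μ − v²/4)t`. -/
noncomputable def solitonPhase (μ v : ℝ) (t x : ℝ) : ℝ :=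
  (1 / 2) * v * x + (1 / 2) * (μ - v ^ 2 / 4) * t

lemma sech_eq (y : ℝ) : sech y = (Real.cosh y)⁻¹ := by
  have h0 : Real.exp y ≠ 0 := (Real.exp_pos y).ne'
  have h1 : Real.exp (2 * y) + 1 ≠ 0 := by positivity
  rw [sech, Real.cosh_eq, Real.exp_neg, show (2:ℝ) * y = y + y from two_mul y, Real.exp_add]
  field_simp

lemma madelung_hj_algebra (μ v K c C S : ℝ) (hK2 : K * K = μ / 2) (hKpos : 0 < K)
    (hc2 : c * c = μ) (hC : 0 < C) (hS : S ^ 2 = C ^ 2 - 1) :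
    1 / 2 * (μ - v ^ 2 / 4) + 1 / 2 * (v / 2) ^ 2
      = 2 * (μ / 2 * (C⁻¹) ^ 2)
        + 1 / 2 * (-(K * c) * (C * (c * 1)) * (C ^ 2)⁻¹
            + -(K * c) * S * (-(((2:ℕ):ℝ) * C ^ 1 * (S * (c * 1))) / (C ^ 2) ^ 2)) / (K * C⁻¹) := by
  have hCne : C ≠ 0 := hC.ne'
  have hKne : K ≠ 0 := hKpos.ne'
  field_simp
  linear_combination (16 * C ^ 2 - 32 * S ^ 2) * hc2
    + (-32 * μ) * hS


/-- For `μ > 0`, the pair `(ρ, Φ)` given by the Gross–Pitaevskii soliton satisfies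
the Madelung system of the 1D GPE with `γ = −2`:
(i) the continuity equation `∂ₜρ + ∂ₓ(ρ ∂ₓΦ) = 0`, and
(ii) the Hamilton–Jacobi equation `∂ₜΦ + (1/2)(∂ₓΦ)² = 2ρ + (1/2)∂ₓₓ(√ρ)/√ρ`. -/
theorem soliton_madelung_system (μ v : ℝ) (hμ : 0 < μ) :
    ∀ t x : ℝ,
      (deriv (fun s => solitonDensity μ v s x) t
          + deriv (fun y => solitonDensity μ v t y * deriv (fun z => solitonPhase μ v t z) y) x
        = 0)
      ∧ (deriv (fun s => solitonPhase μ v s x) t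
            + (1 / 2) * (deriv (fun y => solitonPhase μ v t y) x) ^ 2
          = 2 * solitonDensity μ v t x
            + (1 / 2) * deriv (deriv (fun y => Real.sqrt (solitonDensity μ v t y))) x
                / Real.sqrt (solitonDensity μ v t x)) := by
  intro t x
  set c := Real.sqrt μ with hc
  have hc2 : c * c = μ := Real.mul_self_sqrt hμ.le
  set u : ℝ := c * (x - v * t / 2) with hudef
  have hcoshpos : 0 < Real.cosh u := Real.cosh_pos u
  have hcoshne : Real.cosh u ≠ 0 := hcoshpos.ne'
  -- phase x-derivative is v/2 everywhere
  have hΦx : ∀ y : ℝ, deriv (fun z => solitonPhase μ v t z) y = v / 2 := by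
    intro y
    have h : HasDerivAt (fun z : ℝ => solitonPhase μ v t z) (v / 2) y := by
      unfold solitonPhase
      have := ((hasDerivAt_id y).const_mul (1 / 2 * v : ℝ)).add_const
        (1 / 2 * (μ - v ^ 2 / 4) * t)
      exact this.congr_deriv (by ring)
    exact h.deriv
  -- derivative of the "profile" F w = μ/2 * ((cosh w)⁻¹)^2
  have hF : ∀ w : ℝ, HasDerivAt (fun w' => μ / 2 * ((Real.cosh w')⁻¹) ^ 2)
      (μ / 2 * ((2 : ℕ) * ((Real.cosh w)⁻¹) ^ 1 * (-(Real.sinh w) / (Real.cosh w) ^ 2))) w := by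
    intro w
    exact (((Real.hasDerivAt_cosh w).inv (Real.cosh_pos w).ne').pow 2).const_mul (μ / 2)
  -- inner affine maps
  have hut : HasDerivAt (fun s : ℝ => c * (x - v * s / 2)) (c * (0 - v * 1 / 2)) t := by
    exact ((hasDerivAt_const t x).sub (((hasDerivAt_id t).const_mul v).div_const 2)).const_mul c
  have hux : ∀ y : ℝ, HasDerivAt (fun y' : ℝ => c * (y' - v * t / 2)) (c * 1) y := by
    intro y
    exact (((hasDerivAt_id y).sub_const (v * t / 2)).const_mul c)
  set D : ℝ := μ / 2 * ((2 : ℕ) * ((Real.cosh u)⁻¹) ^ 1 * (-(Real.sinh u) / (Real.cosh u) ^ 2))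
    with hD
  -- time derivative of density
  have hρt : deriv (fun s => solitonDensity μ v s x) t = D * (c * (0 - v * 1 / 2)) := by
    have h := (hF u).comp t hut
    have h2 : HasDerivAt (fun s => solitonDensity μ v s x) (D * (c * (0 - v * 1 / 2))) t := by
      simp only [solitonDensity, sech_eq]
      exact h
    exact h2.deriv
  -- space derivative of density
  have hρx : HasDerivAt (fun y => solitonDensity μ v t y) (D * (c * 1)) x := by
    have h := (hF u).comp x (hux x)
    simp only [solitonDensity, sech_eq]
    exact h
  constructor
  · -- continuity equation
    have heq : (fun y => solitonDensity μ v t y * deriv (fun z => solitonPhase μ v t z) y)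
        = fun y => solitonDensity μ v t y * (v / 2) := by
      funext y; rw [hΦx y]
    rw [heq, hρt, (hρx.mul_const (v / 2)).deriv]
    ring
  · -- Hamilton–Jacobi equation
    have hΦt : deriv (fun s => solitonPhase μ v s x) t = 1 / 2 * (μ - v ^ 2 / 4) := by
      have h : HasDerivAt (fun s : ℝ => solitonPhase μ v s x) (1 / 2 * (μ - v ^ 2 / 4)) t := by
        unfold solitonPhase
        simpa using ((hasDerivAt_id t).const_mul (1 / 2 * (μ - v ^ 2 / 4) : ℝ)).const_add
          (1 / 2 * v * x)
      exact h.deriv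
    set K : ℝ := Real.sqrt (μ / 2) with hK
    have hK2 : K * K = μ / 2 := Real.mul_self_sqrt (by positivity)
    have hKpos : 0 < K := Real.sqrt_pos.mpr (by positivity)
    have hsqrt : (fun y => Real.sqrt (solitonDensity μ v t y))
        = fun y => K * (Real.cosh (c * (y - v * t / 2)))⁻¹ := by
      funext y
      rw [solitonDensity, sech_eq, Real.sqrt_mul (by positivity), Real.sqrt_sq (by positivity)]
    -- first derivative of √ρ
    have hG : ∀ y : ℝ, HasDerivAt (fun y' => K * (Real.cosh (c * (y' - v * t / 2)))⁻¹)
        (K * (-(Real.sinh (c * (y - v * t / 2))) / (Real.cosh (c * (y - v * t / 2))) ^ 2 * (c * 1)))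
        y := by
      intro y
      have hcomp := (((Real.hasDerivAt_cosh (c * (y - v * t / 2))).inv
        (Real.cosh_pos _).ne').comp y (hux y))
      exact hcomp.const_mul K
    have hd1 : deriv (fun y => Real.sqrt (solitonDensity μ v t y))
        = fun y => (-(K * c)) * Real.sinh (c * (y - v * t / 2))
            * ((Real.cosh (c * (y - v * t / 2))) ^ 2)⁻¹ := by
      rw [hsqrt]
      funext y
      rw [(hG y).deriv]
      ring
    -- second derivative of √ρ
    have hs : HasDerivAt (fun y : ℝ => Real.sinh (c * (y - v * t / 2)))
        (Real.cosh u * (c * 1)) x := by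
        have := (Real.hasDerivAt_sinh u).comp x (hux x); exact this
    have hcc : HasDerivAt (fun y : ℝ => ((Real.cosh (c * (y - v * t / 2))) ^ 2)⁻¹)
        (-((2 : ℕ) * (Real.cosh u) ^ 1 * (Real.sinh u * (c * 1))) / ((Real.cosh u) ^ 2) ^ 2)
        x := by
      have hpow : HasDerivAt (fun y : ℝ => (Real.cosh (c * (y - v * t / 2))) ^ 2)
          ((2 : ℕ) * (Real.cosh u) ^ 1 * (Real.sinh u * (c * 1))) x := by
        have := (((Real.hasDerivAt_cosh u).comp x (hux x))).pow 2; exact this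
      exact hpow.inv (by positivity)
    have hd2 : HasDerivAt (fun y => (-(K * c)) * Real.sinh (c * (y - v * t / 2))
          * ((Real.cosh (c * (y - v * t / 2))) ^ 2)⁻¹)
        ((-(K * c)) * (Real.cosh u * (c * 1)) * ((Real.cosh u) ^ 2)⁻¹
          + (-(K * c)) * Real.sinh u
            * (-((2 : ℕ) * (Real.cosh u) ^ 1 * (Real.sinh u * (c * 1))) / ((Real.cosh u) ^ 2) ^ 2))
        x := (hs.const_mul (-(K * c))).mul hcc
    have hρval : solitonDensity μ v t x = μ / 2 * ((Real.cosh u)⁻¹) ^ 2 := by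
      rw [solitonDensity, sech_eq]
    have hsqx : Real.sqrt (solitonDensity μ v t x) = K * (Real.cosh u)⁻¹ :=
      congrFun hsqrt x
    rw [hΦt, hΦx x, hd1, hd2.deriv, hsqx, hρval]
    have hsinh : Real.sinh u ^ 2 = Real.cosh u ^ 2 - 1 := by
      have := Real.cosh_sq_sub_sinh_sq u; linarith
    exact madelung_hj_algebra μ v K c (Real.cosh u) (Real.sinh u) hK2 hKpos hc2 hcoshpos hsinh
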